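/- Let b>0, σ>0 satisfy σ² ≤ 2b, let T>0, x₀>0. There exists a constant K > 0, depending only on b, σ, T, x₀ (and not on n), such that for every integer n > 2T the additive scheme X₀⁽ⁿ⁾ = x₀, X_k⁽ⁿ⁾ = X_{k−1}⁽ⁿ⁾ + (b − X_{k−1}⁽ⁿ⁾)T/n + σ q_k √(X_{k−1}⁽ⁿ⁾), driven by i.i.d. random variables q₁,…,qₙ with P(q_k = ±√(T/n)) = 1/2, satisfies E[ max_{0 ≤ k ≤ n} (X_k⁽ⁿ⁾)² ] ≤ K. -/

import Mathlib

open MeasureTheory ProbabilityTheory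

noncomputable def Ysc (b σ x₀ u : ℝ) : ℕ → (ℕ → ℝ) → ℝ
  | 0 => fun _ => x₀
  | (k+1) => fun v => Ysc b σ x₀ u k v + (b - Ysc b σ x₀ u k v) * u
      + σ * v (k+1) * Real.sqrt (Ysc b σ x₀ u k v)

noncomputable def Wsc (b σ x₀ u ρ : ℝ) (k : ℕ) (v : ℕ → ℝ) : ℝ :=
  (Ysc b σ x₀ u k v - b) / ρ ^ k

noncomputable def Ssc (b σ x₀ u ρ : ℝ) : ℕ → (ℕ → ℝ) → ℝ
  | 0 => fun v => |Wsc b σ x₀ u ρ 0 v|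
  | (k+1) => fun v => max (Ssc b σ x₀ u ρ k v) |Wsc b σ x₀ u ρ (k+1) v|

noncomputable def Bsc (b σ x₀ u r : ℝ) : ℕ → ℝ
  | 0 => x₀
  | (k+1) => Bsc b σ x₀ u r k + (b + Bsc b σ x₀ u r k) * u + σ * r * (1 + Bsc b σ x₀ u r k)

variable {b σ x₀ u ρ r : ℝ}

lemma measurable_Ysc (k : ℕ) : Measurable (Ysc b σ x₀ u k) := by
  induction k with
  | zero => exact measurable_const
  | succ k ih =>
    exact ((ih.add ((measurable_const.sub ih).mul measurable_const)).add
      (((measurable_const.mul (measurable_pi_apply _))).mul (ih.sqrt)))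

lemma measurable_Wsc (k : ℕ) : Measurable (Wsc b σ x₀ u ρ k) :=
  ((measurable_Ysc k).sub measurable_const).div measurable_const

lemma measurable_Ssc (k : ℕ) : Measurable (Ssc b σ x₀ u ρ k) := by
  induction k with
  | zero => exact (measurable_Wsc 0).abs
  | succ k ih => exact ih.max (measurable_Wsc (k+1)).abs

lemma Ysc_congr {v w : ℕ → ℝ} (k : ℕ) (h : ∀ i, 1 ≤ i → i ≤ k → v i = w i) :
    Ysc b σ x₀ u k v = Ysc b σ x₀ u k w := by
  induction k with
  | zero => rfl
  | succ k ih =>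
    have hk : Ysc b σ x₀ u k v = Ysc b σ x₀ u k w :=
      ih fun i h1 h2 => h i h1 (h2.trans (Nat.le_succ k))
    simp only [Ysc, hk, h (k+1) (Nat.succ_le_succ (Nat.zero_le k)) le_rfl]

lemma Wsc_congr {v w : ℕ → ℝ} (k : ℕ) (h : ∀ i, 1 ≤ i → i ≤ k → v i = w i) :
    Wsc b σ x₀ u ρ k v = Wsc b σ x₀ u ρ k w := by
  unfold Wsc; rw [Ysc_congr k h]

lemma Ssc_congr {v w : ℕ → ℝ} (k : ℕ) (h : ∀ i, 1 ≤ i → i ≤ k → v i = w i) :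
    Ssc b σ x₀ u ρ k v = Ssc b σ x₀ u ρ k w := by
  induction k with
  | zero => simp only [Ssc, Wsc_congr 0 (fun i h1 h2 => h i h1 h2)]
  | succ k ih =>
    have hk := ih fun i h1 h2 => h i h1 (h2.trans (Nat.le_succ k))
    simp only [Ssc, hk, Wsc_congr (k+1) h]

lemma Ssc_nonneg (k : ℕ) (v : ℕ → ℝ) : 0 ≤ Ssc b σ x₀ u ρ k v := by
  induction k with
  | zero => exact abs_nonneg _
  | succ k ih => exact le_trans ih (le_max_left _ _)

lemma Wsc_le_Ssc {j k : ℕ} (h : j ≤ k) (v : ℕ → ℝ) :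
    |Wsc b σ x₀ u ρ j v| ≤ Ssc b σ x₀ u ρ k v := by
  induction k with
  | zero => simp_all [Ssc, Nat.le_zero.mp h]
  | succ k ih =>
    rcases Nat.lt_succ_iff_lt_or_eq.mp (Nat.lt_succ_of_le h) with h' | h'
    · exact le_trans (ih (Nat.lt_succ_iff.mp h')) (le_max_left _ _)
    · subst h'; exact le_max_right _ _

lemma sqrt_le_one_add {β : ℝ} (hβ : 0 ≤ β) : Real.sqrt β ≤ 1 + β := by
  have := Real.sqrt_le_sqrt (show β ≤ (1+β)^2 by nlinarith)
  rwa [Real.sqrt_sq (by linarith)] at this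

lemma stepBound (hb : 0 ≤ b) (hσ : 0 ≤ σ) (hu : 0 ≤ u) (hr : 0 ≤ r)
    {y t β : ℝ} (hy : |y| ≤ β) (ht : |t| ≤ r) :
    |y + (b - y) * u + σ * t * Real.sqrt y| ≤ β + (b + β) * u + σ * r * (1 + β) := by
  have h0 : 0 ≤ β := le_trans (abs_nonneg y) hy
  have hs : Real.sqrt y ≤ 1 + β := by
    calc Real.sqrt y ≤ Real.sqrt β := Real.sqrt_le_sqrt (le_trans (le_abs_self y) hy)
    _ ≤ 1 + β := sqrt_le_one_add h0
  have hs0 : 0 ≤ Real.sqrt y := Real.sqrt_nonneg y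
  have h1 : |(b - y) * u| ≤ (b + β) * u := by
    rw [abs_mul, abs_of_nonneg hu]
    have : |b - y| ≤ b + β := by
      have := abs_le.mp hy; rw [abs_le]; constructor <;> nlinarith
    nlinarith
  have h2 : |σ * t * Real.sqrt y| ≤ σ * r * (1 + β) := by
    rw [abs_mul, abs_mul, abs_of_nonneg hσ, abs_of_nonneg hs0]
    have h3 : 0 ≤ σ * r := mul_nonneg hσ hr
    have h4 : σ * |t| ≤ σ * r := mul_le_mul_of_nonneg_left ht hσ
    nlinarith [abs_nonneg t, mul_le_mul h4 hs hs0 (mul_nonneg hσ hr)]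
  calc |y + (b - y) * u + σ * t * Real.sqrt y|
      ≤ |y + (b - y) * u| + |σ * t * Real.sqrt y| := abs_add_le _ _
    _ ≤ |y| + |(b - y) * u| + |σ * t * Real.sqrt y| := by
        have := abs_add_le y ((b - y) * u); linarith
    _ ≤ β + (b + β) * u + σ * r * (1 + β) := by linarith

lemma Bsc_nonneg (hb : 0 ≤ b) (hσ : 0 ≤ σ) (hx : 0 ≤ x₀) (hu : 0 ≤ u) (hr : 0 ≤ r) (k : ℕ) :
    0 ≤ Bsc b σ x₀ u r k := by
  induction k with
  | zero => exact hx
  | succ k ih =>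
    simp only [Bsc]
    have : 0 ≤ (b + Bsc b σ x₀ u r k) * u := mul_nonneg (by linarith) hu
    have : 0 ≤ σ * r * (1 + Bsc b σ x₀ u r k) := mul_nonneg (mul_nonneg hσ hr) (by linarith)
    linarith

lemma Bsc_mono (hb : 0 ≤ b) (hσ : 0 ≤ σ) (hx : 0 ≤ x₀) (hu : 0 ≤ u) (hr : 0 ≤ r)
    {j k : ℕ} (h : j ≤ k) : Bsc b σ x₀ u r j ≤ Bsc b σ x₀ u r k := by
  induction k with
  | zero => simp [Nat.le_zero.mp h]
  | succ k ih =>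
    rcases Nat.lt_succ_iff_lt_or_eq.mp (Nat.lt_succ_of_le h) with h' | h'
    · refine le_trans (ih (Nat.lt_succ_iff.mp h')) ?_
      simp only [Bsc]
      have h1 := Bsc_nonneg hb hσ hx hu hr (b := b) (σ := σ) k
      have : 0 ≤ (b + Bsc b σ x₀ u r k) * u := mul_nonneg (by linarith) hu
      have : 0 ≤ σ * r * (1 + Bsc b σ x₀ u r k) := mul_nonneg (mul_nonneg hσ hr) (by linarith)
      linarith
    · subst h'; rfl

lemma Ysc_bound (hb : 0 ≤ b) (hσ : 0 ≤ σ) (hx : 0 ≤ x₀) (hu : 0 ≤ u) (hr : 0 ≤ r)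
    {v : ℕ → ℝ} (k : ℕ) (h : ∀ i, 1 ≤ i → i ≤ k → |v i| ≤ r) :
    |Ysc b σ x₀ u k v| ≤ Bsc b σ x₀ u r k := by
  induction k with
  | zero => simp [Ysc, Bsc, abs_of_nonneg hx]
  | succ k ih =>
    have hk := ih fun i h1 h2 => h i h1 (h2.trans (Nat.le_succ k))
    exact stepBound hb hσ hu hr hk (h (k+1) (Nat.succ_le_succ (Nat.zero_le k)) le_rfl)

lemma pathwise_doob (f S : ℕ → ℝ) (hf : ∀ k, 0 ≤ f k) (h0 : S 0 = f 0)
    (hS : ∀ k, S (k+1) = max (S k) (f (k+1))) (n : ℕ) :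
    S n ^ 2 ≤ 2 * (S n * f n) - 2 * ∑ k ∈ Finset.range n, S k * (f (k+1) - f k) := by
  induction n with
  | zero => simp [h0]; nlinarith [hf 0]
  | succ n ih =>
    rw [Finset.sum_range_succ]
    have hSn : 0 ≤ S n := by
      have : ∀ m, 0 ≤ S m := by
        intro m; induction m with
        | zero => rw [h0]; exact hf 0
        | succ m ihm => rw [hS m]; exact le_trans ihm (le_max_left _ _)
      exact this n
    by_cases h : f (n+1) ≤ S n
    · have hmax : S (n+1) = S n := by rw [hS n]; exact max_eq_left h
      rw [hmax]; nlinarith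
    · push_neg at h
      have hmax : S (n+1) = f (n+1) := by rw [hS n]; exact max_eq_right h.le
      rw [hmax]; nlinarith


lemma half_square_bound (b σ u c d₀ r y : ℝ)
    (hu0 : 0 < u) (hu2 : u ≤ 1/2)
    (hr2 : r^2 = u) (hc : c = σ^2/2) (hd : d₀ = b^2 + σ^2/2) :
    (1/2)*((y + (b - y)*u + σ*r*Real.sqrt y)^2)
      + (1/2)*((y + (b - y)*u + σ*(-r)*Real.sqrt y)^2)
      ≤ (1 - u + c*u)*y^2 + u*d₀ := by
  set s := Real.sqrt y with hs_def
  have hs2 : s^2 ≤ (1 + y^2)/2 := by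
    rcases le_or_gt 0 y with h | h
    · rw [hs_def, Real.sq_sqrt h]; nlinarith [sq_nonneg (y - 1)]
    · rw [hs_def, Real.sqrt_eq_zero_of_nonpos h.le]; nlinarith [sq_nonneg y]
  have hg : (y + (b - y)*u)^2 ≤ (1-u)*y^2 + u*b^2 := by
    nlinarith [mul_nonneg (mul_nonneg hu0.le (by linarith : (0:ℝ) ≤ 1 - u)) (sq_nonneg (y - b))]
  have hs2' : σ^2*u*s^2 ≤ σ^2*u*((1 + y^2)/2) :=
    mul_le_mul_of_nonneg_left hs2 (by positivity)
  have ha : (σ*r*s)^2 = σ^2*u*s^2 := by rw [mul_pow, mul_pow, hr2]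
  subst hc hd
  nlinarith [hg, hs2', ha]

lemma moment_step (u c d₀ x₀ m I : ℝ) (k : ℕ)
    (hu0 : 0 < u) (hu2 : u ≤ 1/2) (hc0 : 0 ≤ c) (hd0 : 0 ≤ d₀)
    (hI : I ≤ (1 - u + c*u)*m + u*d₀)
    (hm : m ≤ (x₀^2 + d₀*u*k)*(1+c*u)^k) :
    I ≤ (x₀^2 + d₀*u*(k+1 : ℕ))*(1+c*u)^(k+1) := by
  have hγ0 : (0:ℝ) ≤ 1 - u + c*u := by nlinarith
  have hγ1 : (1:ℝ) - u + c*u ≤ 1 + c*u := by linarith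
  have hone : (1:ℝ) ≤ 1 + c*u := by nlinarith
  have hQ0 : (0:ℝ) ≤ (1+c*u)^k := pow_nonneg (by linarith) k
  have hQ1 : (1:ℝ) ≤ (1+c*u)^k := one_le_pow₀ hone
  have hP0 : (0:ℝ) ≤ x₀^2 + d₀*u*k := by positivity
  have t1 : (1 - u + c*u)*m ≤ (1 - u + c*u)*((x₀^2 + d₀*u*k)*(1+c*u)^k) :=
    mul_le_mul_of_nonneg_left hm hγ0
  have t2 : (1 - u + c*u)*((x₀^2 + d₀*u*k)*(1+c*u)^k)
      ≤ (1 + c*u)*((x₀^2 + d₀*u*k)*(1+c*u)^k) :=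
    mul_le_mul_of_nonneg_right hγ1 (mul_nonneg hP0 hQ0)
  have hQ1' : (1:ℝ) ≤ (1+c*u)^k * (1+c*u) := by nlinarith
  have t3 : u*d₀ ≤ u*d₀*((1+c*u)^k*(1+c*u)) :=
    le_mul_of_one_le_right (mul_nonneg hu0.le hd0) hQ1'
  rw [pow_succ (1+c*u) k]
  push_cast
  nlinarith [t1, t2, t3]

lemma young_bound (S W : ℝ) : 2*(S*|W|) ≤ S^2/2 + 2*W^2 := by
  nlinarith [sq_nonneg (S - 2*|W|), sq_abs W]

lemma sq_sub_le (y bb : ℝ) : (y - bb)^2 ≤ 2*y^2 + 2*bb^2 := by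
  nlinarith [sq_nonneg (y + bb)]

lemma rho_exp_bound (u T : ℝ) (n : ℕ) (hu0 : 0 < u) (hu2 : u ≤ 1/2) (hun : u*n = T) :
    1 ≤ Real.exp (4*T) * (((1-u)^n)^2) := by
  have h1 : 1 ≤ (1-u) * Real.exp (2*u) := by nlinarith [Real.add_one_le_exp (2*u)]
  have h2 : (1:ℝ) ≤ ((1-u) * Real.exp (2*u))^n := one_le_pow₀ h1
  rw [mul_pow, ← Real.exp_nat_mul] at h2
  have h3 : (n:ℝ)*(2*u) = 2*T := by rw [← hun]; ring
  rw [h3] at h2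
  have h4 := mul_le_mul h2 h2 (by norm_num) (by positivity)
  have h5 : Real.exp (2*T) * Real.exp (2*T) = Real.exp (4*T) := by
    rw [← Real.exp_add]; ring_nf
  have h6 : ((1-u)^n * Real.exp (2*T)) * ((1-u)^n * Real.exp (2*T))
      = Real.exp (4*T) * (((1-u)^n)^2) := by rw [← h5]; ring
  rw [h6] at h4
  linarith [h4]

lemma final_sq_bound (w p bb S : ℝ) (hw : |w| ≤ S) (hp2 : p^2 ≤ 1) :
    (w*p + bb)^2 ≤ 2*S^2 + 2*bb^2 := by
  have h3 : w^2 ≤ S^2 := by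
    have h := pow_le_pow_left₀ (abs_nonneg w) hw 2
    rw [sq_abs] at h; exact h
  have h2 : w^2*p^2 ≤ w^2 := by nlinarith [mul_le_mul_of_nonneg_left hp2 (sq_nonneg w)]
  have h1 : (w*p)^2 ≤ S^2 := by rw [mul_pow]; linarith
  nlinarith [sq_nonneg (w*p - bb), h1]

lemma abs_avg_ge (S w A : ℝ) (hS : 0 ≤ S) :
    S*|w| ≤ (1/2)*(S*|w + A|) + (1/2)*(S*|w + -A|) := by
  have h := abs_add_le (w + A) (w + -A)
  have h2 : w + A + (w + -A) = 2*w := by ring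
  rw [h2, abs_mul] at h
  have h25 : |(2:ℝ)| = 2 := by norm_num
  rw [h25] at h
  nlinarith [mul_le_mul_of_nonneg_left h hS]

lemma div_pow_bound (a pw M twoN : ℝ) (hM : a ≤ M) (hpw : 0 < pw)
    (h1 : 1 ≤ twoN * pw) (hM0 : 0 ≤ M) : a / pw ≤ M * twoN := by
  rw [div_le_iff₀ hpw]
  calc a ≤ M := hM
    _ = M * 1 := by ring
    _ ≤ M * (twoN * pw) := mul_le_mul_of_nonneg_left h1 hM0
    _ = M * twoN * pw := by ring

lemma star_lemma {Ω : Type} [MeasurableSpace Ω] (μ : Measure Ω) [IsProbabilityMeasure μ]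
    (V : Ω → ℕ → ℝ) (qk : Ω → ℝ) (hqk : Measurable qk)
    (h_ind : IndepFun V qk μ) (r : ℝ) (hr : 0 < r)
    (h1 : μ {ω | qk ω = r} = 1/2) (h2 : μ {ω | qk ω = -r} = 1/2)
    (ψ : (ℕ → ℝ) → ℝ → ℝ)
    (hψr : Measurable (fun v => ψ v r)) (hψmr : Measurable (fun v => ψ v (-r)))
    (hintr : Integrable (fun ω => ψ (V ω) r) μ)
    (hintmr : Integrable (fun ω => ψ (V ω) (-r)) μ) :
    ∫ ω, ψ (V ω) (qk ω) ∂μ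
      = (1/2) * ∫ ω, ψ (V ω) r ∂μ + (1/2) * ∫ ω, ψ (V ω) (-r) ∂μ := by
  have hrne : r ≠ -r := by intro h; linarith [h ▸ hr]
  set A : Set Ω := qk ⁻¹' {r} with hA
  set B : Set Ω := qk ⁻¹' {-r} with hB
  have hAm : MeasurableSet A := hqk (measurableSet_singleton r)
  have hBm : MeasurableSet B := hqk (measurableSet_singleton (-r))
  have hdisj : Disjoint A B := by
    rw [Set.disjoint_left]
    rintro ω (h1 : qk ω = r) (h2 : qk ω = -r)
    exact hrne (h1.symm.trans h2)
  have hApr : μ A = 1/2 := by rw [hA]; exact h1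
  have hBpr : μ B = 1/2 := by rw [hB]; exact h2
  have hunion : μ (A ∪ B) = 1 := by
    rw [measure_union hdisj hBm, hApr, hBpr, ENNReal.add_halves]
  have hae : ∀ᵐ ω ∂μ, ω ∈ A ∪ B := by
    rw [ae_iff]
    have : {ω | ¬ ω ∈ A ∪ B} = (A ∪ B)ᶜ := rfl
    rw [this, measure_compl (hAm.union hBm) (measure_ne_top μ _), hunion, measure_univ, tsub_self]
  -- indicator functions of qk values
  have hgr : (fun ω => ψ (V ω) r * ({r} : Set ℝ).indicator (fun _ => (1:ℝ)) (qk ω))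
      = A.indicator (fun ω => ψ (V ω) r) := by
    funext ω
    by_cases h : qk ω = r
    · simp [Set.indicator_of_mem, h, hA, Set.mem_preimage]
    · simp [h, hA, Set.indicator_of_notMem, Set.mem_preimage]
  have hgmr : (fun ω => ψ (V ω) (-r) * ({-r} : Set ℝ).indicator (fun _ => (1:ℝ)) (qk ω))
      = B.indicator (fun ω => ψ (V ω) (-r)) := by
    funext ω
    by_cases h : qk ω = -r
    · simp [Set.indicator_of_mem, h, hB, Set.mem_preimage]
    · simp [h, hB, Set.indicator_of_notMem, Set.mem_preimage]
  have haeeq : (fun ω => ψ (V ω) (qk ω))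
      =ᵐ[μ] (fun ω => A.indicator (fun ω => ψ (V ω) r) ω + B.indicator (fun ω => ψ (V ω) (-r)) ω) := by
    filter_upwards [hae] with ω hω
    rcases hω with h | h
    · have h' : qk ω = r := h
      have hnB : ω ∉ B := fun hB' => hrne (h'.symm.trans hB')
      rw [Set.indicator_of_mem h, Set.indicator_of_notMem hnB, h', add_zero]
    · have h' : qk ω = -r := h
      have hnA : ω ∉ A := fun hA' => hrne (hA'.symm.trans h')
      rw [Set.indicator_of_notMem hnA, Set.indicator_of_mem h, h', zero_add]
  have hintA : Integrable (A.indicator (fun ω => ψ (V ω) r)) μ := hintr.indicator hAm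
  have hintB : Integrable (B.indicator (fun ω => ψ (V ω) (-r))) μ := hintmr.indicator hBm
  rw [integral_congr_ae haeeq, integral_add hintA hintB]
  have hindic : ∀ (c : ℝ) (hc : Measurable (fun v => ψ v c)) (hic : Integrable (fun ω => ψ (V ω) c) μ)
      (s : Set ℝ) (hs : MeasurableSet s),
      ∫ ω, ψ (V ω) c * s.indicator (fun _ => (1:ℝ)) (qk ω) ∂μ
        = (∫ ω, ψ (V ω) c ∂μ) * (μ (qk ⁻¹' s)).toReal := by
    intro c hc hic s hs
    have hind2 : IndepFun (fun ω => ψ (V ω) c) (fun ω => s.indicator (fun _ => (1:ℝ)) (qk ω)) μ :=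
      h_ind.comp hc ((measurable_const.indicator hs))
    have hi2 : Integrable (fun ω => s.indicator (fun _ => (1:ℝ)) (qk ω)) μ := by
      refine Integrable.mono' (integrable_const 1) ?_ ?_
      · exact ((measurable_const.indicator hs).comp hqk).aestronglyMeasurable
      · refine Filter.Eventually.of_forall fun ω => ?_
        by_cases h : qk ω ∈ s <;> simp [h, Set.indicator_of_mem, Set.indicator_of_notMem]
    have hmul : ∫ ω, ψ (V ω) c * s.indicator (fun _ => (1:ℝ)) (qk ω) ∂μ
        = (∫ ω, ψ (V ω) c ∂μ) * ∫ ω, s.indicator (fun _ => (1:ℝ)) (qk ω) ∂μ :=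
      IndepFun.integral_fun_mul_eq_mul_integral hind2 hic.aestronglyMeasurable hi2.aestronglyMeasurable
    rw [hmul]
    congr 1
    have : (fun ω => s.indicator (fun _ => (1:ℝ)) (qk ω)) = (qk ⁻¹' s).indicator (fun _ => (1:ℝ)) := by
      funext ω; by_cases h : qk ω ∈ s <;>
        simp [h, Set.indicator_of_mem, Set.indicator_of_notMem, Set.mem_preimage]
    rw [this, integral_indicator_const _ (hqk hs)]
    simp [mul_comm]
    rfl
  have e1 : ∫ ω, A.indicator (fun ω => ψ (V ω) r) ω ∂μ = (∫ ω, ψ (V ω) r ∂μ) * (1/2) := by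
    rw [← hgr, hindic r hψr hintr {r} (measurableSet_singleton r), ← hA, hApr]
    norm_num
  have e2 : ∫ ω, B.indicator (fun ω => ψ (V ω) (-r)) ω ∂μ = (∫ ω, ψ (V ω) (-r) ∂μ) * (1/2) := by
    rw [← hgmr, hindic (-r) hψmr hintmr {-r} (measurableSet_singleton (-r)), ← hB, hBpr]
    norm_num
  rw [e1, e2]; ring

set_option maxHeartbeats 2000000 in
/-- There is a constant `K > 0` depending only on `b, σ, T, x₀` such that
for every integer `n > 2T`, the additive Euler scheme for the CIR process driven by
i.i.d. variables `q_k = ±√(T/n)` (probability 1/2 each) satisfies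
`E[max_{0 ≤ k ≤ n} (X_k)²] ≤ K`. -/
theorem cir_euler_max_second_moment_bound (b σ T x₀ : ℝ)
    (hb : 0 < b) (hσ : 0 < σ) (hσ2 : σ ^ 2 ≤ 2 * b)
    (hT : 0 < T) (hx₀ : 0 < x₀) :
    ∃ K > 0, ∀ (n : ℕ), 2 * T < (n : ℝ) →
      ∀ (Ω : Type) (_ : MeasurableSpace Ω) (μ : Measure Ω), IsProbabilityMeasure μ →
      ∀ (q : ℕ → Ω → ℝ), (∀ k, Measurable (q k)) →
      iIndepFun (fun i : Fin n => q (i + 1)) μ →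
      (∀ k, 1 ≤ k → k ≤ n →
        μ {ω | q k ω = Real.sqrt (T / n)} = 1 / 2 ∧
          μ {ω | q k ω = -Real.sqrt (T / n)} = 1 / 2) →
      ∀ (X : ℕ → Ω → ℝ), (∀ ω, X 0 ω = x₀) →
      (∀ k, 1 ≤ k → k ≤ n → ∀ ω,
        X k ω = X (k - 1) ω + (b - X (k - 1) ω) * T / n
          + σ * q k ω * Real.sqrt (X (k - 1) ω)) →
      ∫ ω, (Finset.Iic n).sup' Finset.nonempty_Iic (fun k => (X k ω) ^ 2) ∂μ ≤ K := by
  classical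
  set c : ℝ := σ^2/2 with hc_def
  set d₀ : ℝ := b^2 + σ^2/2 with hd_def
  set C2 : ℝ := (x₀^2 + d₀*T) * Real.exp (c*T) with hC2_def
  have hc0 : 0 ≤ c := by positivity
  have hd0 : 0 ≤ d₀ := by positivity
  have hC20 : 0 < C2 := by positivity
  refine ⟨16 * Real.exp (4*T) * (C2 + b^2) + 2*b^2 + 1, by positivity, ?_⟩
  intro n hn Ω mΩ μ hμ q hq hind hq2 X hX0 hXrec
  -- basic numerics
  have hn0 : (0:ℝ) < n := lt_trans (by linarith) hn
  have hnn : 0 < n := by exact_mod_cast hn0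
  set u : ℝ := T / n with hu_def
  have hu0 : 0 < u := div_pos hT hn0
  have hu2 : u ≤ 1/2 := by rw [hu_def, div_le_iff₀ hn0]; linarith
  have hun : u * n = T := by rw [hu_def]; field_simp
  set r : ℝ := Real.sqrt (T / n) with hr_def
  have hr0 : 0 < r := Real.sqrt_pos.mpr (by rw [← hu_def]; exact hu0)
  have hr2 : r^2 = u := by rw [hr_def, hu_def, Real.sq_sqrt (le_of_lt (div_pos hT hn0))]
  set ρ : ℝ := 1 - u with hρ_def
  have hρ0 : 0 < ρ := by rw [hρ_def]; linarith
  have hρh : 1/2 ≤ ρ := by rw [hρ_def]; linarith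
  have hρ1 : ρ ≤ 1 := by rw [hρ_def]; linarith
  -- truncated driver sequence
  set qt : Ω → ℕ → ℝ := fun ω i => if 1 ≤ i ∧ i ≤ n then q i ω else 0 with hqt_def
  have hqtm : Measurable qt := by
    apply measurable_pi_lambda
    intro i
    by_cases h : 1 ≤ i ∧ i ≤ n
    · simpa [hqt_def, h] using hq i
    · simpa [hqt_def, h] using measurable_const
  -- bridge X = Ysc
  have hXY : ∀ k, k ≤ n → ∀ ω, X k ω = Ysc b σ x₀ u k (qt ω) := by
    intro k
    induction k with
    | zero => intro _ ω; rw [hX0 ω]; rfl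
    | succ k ih =>
      intro hk ω
      have hk' : k ≤ n := le_of_lt (Nat.lt_of_succ_le hk)
      have hrec := hXrec (k+1) (Nat.succ_le_succ (Nat.zero_le k)) hk ω
      simp only [Nat.add_sub_cancel] at hrec
      rw [hrec, ih hk' ω]
      show _ = Ysc b σ x₀ u (k+1) (qt ω)
      simp only [Ysc]
      have hq1 : qt ω (k+1) = q (k+1) ω := by
        simp only [hqt_def]
        rw [if_pos ⟨Nat.succ_le_succ (Nat.zero_le k), hk⟩]
      rw [hq1, hu_def]
      ring
  -- a.e. driver bound
  have hqone : ∀ k, 1 ≤ k → k ≤ n → ∀ᵐ ω ∂μ, |q k ω| = r := by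
    intro k hk1 hk2
    obtain ⟨hA, hB⟩ := hq2 k hk1 hk2
    have hAm : MeasurableSet {ω | q k ω = r} := (hq k) (measurableSet_singleton r)
    have hBm : MeasurableSet {ω | q k ω = -r} := (hq k) (measurableSet_singleton (-r))
    have hdisj : Disjoint {ω | q k ω = r} {ω | q k ω = -r} := by
      rw [Set.disjoint_left]
      rintro ω (h1 : q k ω = r) (h2 : q k ω = -r)
      have : r = -r := h1.symm.trans h2
      linarith
    have hun1 : μ ({ω | q k ω = r} ∪ {ω | q k ω = -r}) = 1 := by
      rw [measure_union hdisj hBm, hA, hB, ENNReal.add_halves]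
    have hae : ∀ᵐ ω ∂μ, ω ∈ {ω | q k ω = r} ∪ {ω | q k ω = -r} := by
      rw [ae_iff]
      have he : {ω | ¬ ω ∈ ({ω | q k ω = r} ∪ {ω | q k ω = -r})}
          = ({ω | q k ω = r} ∪ {ω | q k ω = -r})ᶜ := rfl
      rw [he, measure_compl (hAm.union hBm) (measure_ne_top μ _), hun1, measure_univ, tsub_self]
    filter_upwards [hae] with ω hω
    rcases hω with h | h
    · rw [Set.mem_setOf_eq] at h; rw [h, abs_of_pos hr0]
    · rw [Set.mem_setOf_eq] at h; rw [h, abs_neg, abs_of_pos hr0]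
  have hqall : ∀ᵐ ω ∂μ, ∀ k, 1 ≤ k → k ≤ n → |q k ω| = r := by
    rw [ae_all_iff]
    intro k
    by_cases hk1 : 1 ≤ k
    · by_cases hk2 : k ≤ n
      · filter_upwards [hqone k hk1 hk2] with ω h _ _; exact h
      · exact Filter.Eventually.of_forall fun ω _ h2 => absurd h2 hk2
    · exact Filter.Eventually.of_forall fun ω h1 _ => absurd h1 hk1
  have hbdd : ∀ᵐ ω ∂μ, ∀ k, |Ysc b σ x₀ u k (qt ω)| ≤ Bsc b σ x₀ u r k := by
    filter_upwards [hqall] with ω hω k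
    apply Ysc_bound hb.le hσ.le hx₀.le hu0.le hr0.le
    intro i h1 h2
    by_cases h : i ≤ n
    · have hqi : qt ω i = q i ω := by
        simp only [hqt_def]; rw [if_pos ⟨h1, h⟩]
      rw [hqi, hω i h1 h]
    · have hqi : qt ω i = 0 := by
        simp only [hqt_def]; rw [if_neg (fun hh => h hh.2)]
      rw [hqi, abs_zero]; exact hr0.le
  set D : ℝ := (Bsc b σ x₀ u r n + b) * 2^n with hD_def
  have hBnn : ∀ k, 0 ≤ Bsc b σ x₀ u r k := Bsc_nonneg hb.le hσ.le hx₀.le hu0.le hr0.le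
  have hpow2 : ∀ k, k ≤ n → (1:ℝ) ≤ 2^n * ρ^k := by
    intro k hk
    have h1 : ((1:ℝ)/2)^n ≤ ((1:ℝ)/2)^k :=
      pow_le_pow_of_le_one (by norm_num) (by norm_num) hk
    have h2 : ((1:ℝ)/2)^k ≤ ρ^k := pow_le_pow_left₀ (by norm_num) hρh k
    calc (1:ℝ) = 2^n * ((1:ℝ)/2)^n := by
          rw [← mul_pow]; norm_num
      _ ≤ 2^n * ρ^k := by
          apply mul_le_mul_of_nonneg_left (le_trans h1 h2) (by positivity)
  have hWb : ∀ᵐ ω ∂μ, ∀ k, k ≤ n → |Wsc b σ x₀ u ρ k (qt ω)| ≤ D := by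
    filter_upwards [hbdd] with ω hω k hk
    have hYk := hω k
    have hρk : (0:ℝ) < ρ^k := pow_pos hρ0 k
    have h1 : |Ysc b σ x₀ u k (qt ω) - b| ≤ Bsc b σ x₀ u r k + b := by
      have h2 := abs_le.mp hYk
      rw [abs_le]; constructor <;> [linarith; linarith]
    have hkn : Bsc b σ x₀ u r k ≤ Bsc b σ x₀ u r n :=
      Bsc_mono hb.le hσ.le hx₀.le hu0.le hr0.le hk
    show |(Ysc b σ x₀ u k (qt ω) - b) / ρ^k| ≤ D
    rw [abs_div, abs_of_pos hρk, div_le_iff₀ hρk, hD_def]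
    have h3 := hpow2 k hk
    have h4 : 0 ≤ Bsc b σ x₀ u r n + b := by linarith [hBnn n]
    calc |Ysc b σ x₀ u k (qt ω) - b| ≤ Bsc b σ x₀ u r n + b := by linarith
      _ = (Bsc b σ x₀ u r n + b) * 1 := by ring
      _ ≤ (Bsc b σ x₀ u r n + b) * (2^n * ρ^k) := by
          exact mul_le_mul_of_nonneg_left h3 h4
      _ = (Bsc b σ x₀ u r n + b) * 2^n * ρ^k := by ring
  have hSb : ∀ᵐ ω ∂μ, ∀ k, k ≤ n → Ssc b σ x₀ u ρ k (qt ω) ≤ D := by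
    filter_upwards [hWb] with ω hω k
    induction k with
    | zero => intro _; exact hω 0 (Nat.zero_le n)
    | succ k ih =>
      intro hk
      have h1 := ih (le_of_lt hk)
      have h2 := hω (k+1) hk
      exact max_le h1 h2
  -- integrability helper
  have hIB : ∀ (f : Ω → ℝ), Measurable f → ∀ C : ℝ, (∀ᵐ ω ∂μ, |f ω| ≤ C) → Integrable f μ :=
    fun f hf C hC => Integrable.mono' (integrable_const C) hf.aestronglyMeasurable hC
  -- independence of prefix and next step
  set Vf : ℕ → Ω → ℕ → ℝ := fun k ω i => if 1 ≤ i ∧ i ≤ k then q i ω else 0 with hVf_def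
  have hVm : ∀ k, Measurable (Vf k) := by
    intro k
    apply measurable_pi_lambda
    intro i
    by_cases h : 1 ≤ i ∧ i ≤ k
    · simpa [hVf_def, h] using hq i
    · simpa [hVf_def, h] using measurable_const
  have hVind : ∀ k, k < n → IndepFun (Vf k) (q (k+1)) μ := by
    intro k hk
    set S : Finset (Fin n) := Finset.univ.filter (fun i : Fin n => (i:ℕ) < k) with hS_def
    set T' : Finset (Fin n) := {⟨k, hk⟩} with hT_def
    have hdisj : Disjoint S T' := by
      rw [Finset.disjoint_right]
      intro i hiT hiS
      rw [hT_def, Finset.mem_singleton] at hiT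
      rw [hS_def, Finset.mem_filter] at hiS
      subst hiT
      exact lt_irrefl _ hiS.2
    have hbase := hind.indepFun_finset S T' hdisj (fun i => hq _)
    have hmem : ∀ i : ℕ, 1 ≤ i ∧ i ≤ k → ((⟨min (i-1) k, by omega⟩ : Fin n) ∈ S) := by
      intro i h
      rw [hS_def, Finset.mem_filter]
      refine ⟨Finset.mem_univ _, ?_⟩
      show min (i - 1) k < k
      omega
    set Φ : (S → ℝ) → (ℕ → ℝ) := fun w i =>
      if h : 1 ≤ i ∧ i ≤ k then w ⟨⟨min (i-1) k, by omega⟩, hmem i h⟩ else 0 with hΦ_def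
    have hΦm : Measurable Φ := by
      apply measurable_pi_lambda
      intro i
      by_cases h : 1 ≤ i ∧ i ≤ k
      · simp only [hΦ_def, dif_pos h]
        exact measurable_pi_apply _
      · simp only [hΦ_def, dif_neg h]
        exact measurable_const
    have hkT : (⟨k, hk⟩ : Fin n) ∈ T' := by rw [hT_def]; exact Finset.mem_singleton_self _
    set ev : (T' → ℝ) → ℝ := fun w => w ⟨⟨k, hk⟩, hkT⟩ with hev_def
    have hevm : Measurable ev := measurable_pi_apply _
    have hcomp := hbase.comp hΦm hevm
    have he1 : Φ ∘ (fun a (i : S) => q (↑↑i + 1) a) = Vf k := by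
      funext a i
      simp only [Function.comp_apply, hΦ_def, hVf_def]
      by_cases h : 1 ≤ i ∧ i ≤ k
      · rw [dif_pos h, if_pos h]
        show q (min (i - 1) k + 1) a = q i a
        congr 1
        omega
      · rw [dif_neg h, if_neg h]
    have he2 : ev ∘ (fun a (i : T') => q (↑↑i + 1) a) = q (k+1) := rfl
    rw [he1, he2] at hcomp
    exact hcomp
  -- congruence between Vf k and qt on first k coordinates
  have hVqt : ∀ k, k ≤ n → ∀ ω, ∀ i, 1 ≤ i → i ≤ k → Vf k ω i = qt ω i := by
    intro k hk ω i h1 h2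
    simp only [hVf_def, hqt_def, h1, h2, le_trans h2 hk, and_self, if_true]
  -- second moment bound
  have hYm : ∀ k, Measurable (fun ω => Ysc b σ x₀ u k (qt ω)) :=
    fun k => (measurable_Ysc k).comp hqtm
  have hY2int : ∀ k, Integrable (fun ω => (Ysc b σ x₀ u k (qt ω))^2) μ := by
    intro k
    apply hIB _ ((hYm k).pow_const 2) ((Bsc b σ x₀ u r k)^2)
    filter_upwards [hbdd] with ω hω
    rw [abs_pow]
    exact pow_le_pow_left₀ (abs_nonneg _) (hω k) 2
  have hm : ∀ k, k ≤ n → ∫ ω, (Ysc b σ x₀ u k (qt ω))^2 ∂μ ≤ (x₀^2 + d₀*u*k) * (1+c*u)^k := by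
    intro k
    induction k with
    | zero =>
      intro _
      have he : (fun ω => (Ysc b σ x₀ u 0 (qt ω))^2) = fun _ : Ω => x₀^2 := by
        funext ω; rfl
      rw [he, integral_const]
      simp [measure_univ]
    | succ k ih =>
      intro hk
      have hk' : k < n := hk
      have hkn : k ≤ n := le_of_lt hk'
      set ψ : (ℕ → ℝ) → ℝ → ℝ := fun v t =>
        (Ysc b σ x₀ u k v + (b - Ysc b σ x₀ u k v)*u + σ*t*Real.sqrt (Ysc b σ x₀ u k v))^2
        with hψ_def
      have hYV : ∀ ω, Ysc b σ x₀ u k (Vf k ω) = Ysc b σ x₀ u k (qt ω) :=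
        fun ω => Ysc_congr k (fun i h1 h2 => hVqt k hkn ω i h1 h2)
      have hψm : ∀ t : ℝ, Measurable (fun v => ψ v t) := by
        intro t
        apply Measurable.pow_const
        exact ((measurable_Ysc k).add
          ((measurable_const.sub (measurable_Ysc k)).mul measurable_const)).add
          (measurable_const.mul ((measurable_Ysc k).sqrt))
      have hψbd : ∀ t : ℝ, |t| ≤ r →
          ∀ᵐ ω ∂μ, |ψ (Vf k ω) t| ≤ (Bsc b σ x₀ u r (k+1))^2 := by
        intro t ht
        filter_upwards [hbdd] with ω hω
        have hY : |Ysc b σ x₀ u k (Vf k ω)| ≤ Bsc b σ x₀ u r k := by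
          rw [hYV ω]; exact hω k
        have hstep := stepBound hb.le hσ.le hu0.le hr0.le hY ht
        rw [hψ_def]
        simp only []
        rw [abs_pow]
        have hB1 : Bsc b σ x₀ u r k + (b + Bsc b σ x₀ u r k) * u
            + σ * r * (1 + Bsc b σ x₀ u r k) = Bsc b σ x₀ u r (k+1) := rfl
        rw [hB1] at hstep
        exact pow_le_pow_left₀ (abs_nonneg _) hstep 2
      have hintr : Integrable (fun ω => ψ (Vf k ω) r) μ :=
        hIB _ ((hψm r).comp (hVm k)) _ (hψbd r (by rw [abs_of_pos hr0]))
      have hintmr : Integrable (fun ω => ψ (Vf k ω) (-r)) μ :=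
        hIB _ ((hψm (-r)).comp (hVm k)) _ (hψbd (-r) (by rw [abs_neg, abs_of_pos hr0]))
      obtain ⟨h1, h2⟩ := hq2 (k+1) (Nat.succ_le_succ (Nat.zero_le k)) hk
      have hstar := star_lemma μ (Vf k) (q (k+1)) (hq (k+1)) (hVind k hk') r hr0 h1 h2
        ψ (hψm r) (hψm (-r)) hintr hintmr
      have hq1 : ∀ ω, qt ω (k+1) = q (k+1) ω := by
        intro ω
        simp only [hqt_def]
        rw [if_pos ⟨Nat.succ_le_succ (Nat.zero_le k), hk⟩]
      have hLHS : (fun ω => ψ (Vf k ω) (q (k+1) ω))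
          = fun ω => (Ysc b σ x₀ u (k+1) (qt ω))^2 := by
        funext ω
        rw [hψ_def]
        simp only [Ysc]
        rw [hYV ω, hq1 ω]
      rw [hLHS] at hstar
      have hpt : ∀ ω, (1/2)*ψ (Vf k ω) r + (1/2)*ψ (Vf k ω) (-r)
          ≤ (1 - u + c*u)*(Ysc b σ x₀ u k (qt ω))^2 + u*d₀ := by
        intro ω
        simp only [hψ_def]
        rw [hYV ω]
        exact half_square_bound b σ u c d₀ r (Ysc b σ x₀ u k (qt ω))
          hu0 hu2 hr2 hc_def hd_def
      have hint_sum : Integrable (fun ω => (1/2)*ψ (Vf k ω) r + (1/2)*ψ (Vf k ω) (-r)) μ :=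
        (hintr.const_mul _).add (hintmr.const_mul _)
      have hint_rhs : Integrable (fun ω =>
          (1 - u + c*u)*(Ysc b σ x₀ u k (qt ω))^2 + u*d₀) μ :=
        ((hY2int k).const_mul _).add (integrable_const _)
      calc ∫ ω, (Ysc b σ x₀ u (k+1) (qt ω))^2 ∂μ
          = (1/2) * ∫ ω, ψ (Vf k ω) r ∂μ + (1/2) * ∫ ω, ψ (Vf k ω) (-r) ∂μ := hstar
        _ = ∫ ω, ((1/2)*ψ (Vf k ω) r + (1/2)*ψ (Vf k ω) (-r)) ∂μ := by
            rw [integral_add (hintr.const_mul _) (hintmr.const_mul _),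
              integral_const_mul, integral_const_mul]
        _ ≤ ∫ ω, ((1 - u + c*u)*(Ysc b σ x₀ u k (qt ω))^2 + u*d₀) ∂μ :=
            integral_mono hint_sum hint_rhs hpt
        _ = (1 - u + c*u) * ∫ ω, (Ysc b σ x₀ u k (qt ω))^2 ∂μ + u*d₀ := by
            rw [integral_add ((hY2int k).const_mul _) (integrable_const _),
              integral_const_mul, integral_const]
            simp [measure_univ]
        _ ≤ (x₀^2 + d₀*u*(k+1 : ℕ)) * (1+c*u)^(k+1) :=
            moment_step u c d₀ x₀ _ _ k hu0 hu2 hc0 hd0 le_rfl (ih hkn)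
  have hm2 : ∀ k, k ≤ n → ∫ ω, (Ysc b σ x₀ u k (qt ω))^2 ∂μ ≤ C2 := by
    intro k hk
    refine le_trans (hm k hk) ?_
    have h1 : u*(k:ℝ) ≤ T := by
      rw [← hun]
      exact mul_le_mul_of_nonneg_left (by exact_mod_cast hk) hu0.le
    have hcu0 : (0:ℝ) ≤ c*u := mul_nonneg hc0 hu0.le
    have ha : 1 + c*u ≤ Real.exp (c*u) := by
      have := Real.add_one_le_exp (c*u); linarith
    have h2 : (1+c*u)^k ≤ Real.exp (c*T) := by
      calc (1+c*u)^k ≤ (Real.exp (c*u))^k := pow_le_pow_left₀ (by linarith) ha k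
        _ = Real.exp ((k:ℝ)*(c*u)) := by rw [← Real.exp_nat_mul]
        _ ≤ Real.exp (c*T) := by
            apply Real.exp_le_exp.mpr
            have h3 : c*(u*(k:ℝ)) ≤ c*T := mul_le_mul_of_nonneg_left h1 hc0
            linarith [h3]
    rw [hC2_def]
    have h4 : x₀^2 + d₀*u*(k:ℝ) ≤ x₀^2 + d₀*T := by
      have h5 : d₀*(u*(k:ℝ)) ≤ d₀*T := mul_le_mul_of_nonneg_left h1 hd0
      nlinarith [h5]
    exact mul_le_mul h4 h2 (pow_nonneg (by linarith) k) (by positivity)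
  -- submartingale property of the running max against |W|
  have hsubm : ∀ k, k + 1 ≤ n →
      ∫ ω, Ssc b σ x₀ u ρ k (qt ω) * |Wsc b σ x₀ u ρ k (qt ω)| ∂μ ≤
      ∫ ω, Ssc b σ x₀ u ρ k (qt ω) * |Wsc b σ x₀ u ρ (k+1) (qt ω)| ∂μ := by
    intro k hk
    have hk' : k < n := hk
    have hkn : k ≤ n := le_of_lt hk'
    set ψ : (ℕ → ℝ) → ℝ → ℝ := fun v t =>
      Ssc b σ x₀ u ρ k v *
        |Wsc b σ x₀ u ρ k v + σ*t*Real.sqrt (Ysc b σ x₀ u k v)/ρ^(k+1)| with hψ_def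
    have hYV : ∀ ω, Ysc b σ x₀ u k (Vf k ω) = Ysc b σ x₀ u k (qt ω) :=
      fun ω => Ysc_congr k (hVqt k hkn ω)
    have hWV : ∀ ω, Wsc b σ x₀ u ρ k (Vf k ω) = Wsc b σ x₀ u ρ k (qt ω) :=
      fun ω => Wsc_congr k (hVqt k hkn ω)
    have hSV : ∀ ω, Ssc b σ x₀ u ρ k (Vf k ω) = Ssc b σ x₀ u ρ k (qt ω) :=
      fun ω => Ssc_congr k (hVqt k hkn ω)
    have hψm : ∀ t : ℝ, Measurable (fun v => ψ v t) := fun t =>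
      (measurable_Ssc k).mul (((measurable_Wsc k).add
        ((measurable_const.mul (measurable_Ysc k).sqrt).div_const _)).abs)
    have hD0 : 0 ≤ D := by
      rw [hD_def]
      exact mul_nonneg (by linarith [hBnn n]) (by positivity)
    set E : ℝ := σ*r*(1 + Bsc b σ x₀ u r n)*(2:ℝ)^n with hE_def
    have hψbd : ∀ t : ℝ, |t| ≤ r →
        ∀ᵐ ω ∂μ, |ψ (Vf k ω) t| ≤ D * (D + E) := by
      intro t ht
      filter_upwards [hbdd, hWb, hSb] with ω h1 h2 h3
      simp only [hψ_def]
      rw [hYV ω, hWV ω, hSV ω]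
      have hS0 : 0 ≤ Ssc b σ x₀ u ρ k (qt ω) := Ssc_nonneg k _
      have hSD := h3 k hkn
      have hWD := h2 k hkn
      have hsqy : Real.sqrt (Ysc b σ x₀ u k (qt ω)) ≤ 1 + Bsc b σ x₀ u r n := by
        calc Real.sqrt (Ysc b σ x₀ u k (qt ω))
            ≤ Real.sqrt (Bsc b σ x₀ u r n) := Real.sqrt_le_sqrt (le_trans (le_abs_self _)
              (le_trans (h1 k) (Bsc_mono hb.le hσ.le hx₀.le hu0.le hr0.le hkn)))
          _ ≤ 1 + Bsc b σ x₀ u r n := sqrt_le_one_add (hBnn n)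
      have hA : |σ*t*Real.sqrt (Ysc b σ x₀ u k (qt ω))/ρ^(k+1)| ≤ E := by
        rw [abs_div, abs_of_pos (pow_pos hρ0 (k+1))]
        rw [hE_def]
        apply div_pow_bound _ _ _ _ _ (pow_pos hρ0 (k+1)) (hpow2 (k+1) hk)
          (mul_nonneg (mul_nonneg hσ.le hr0.le) (by linarith [hBnn n]))
        rw [abs_mul, abs_mul, abs_of_nonneg hσ.le]
        have hb1 : σ * |t| ≤ σ * r := mul_le_mul_of_nonneg_left ht hσ.le
        rw [abs_of_nonneg (Real.sqrt_nonneg _)]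
        exact mul_le_mul hb1 hsqy (Real.sqrt_nonneg _) (by positivity)
      rw [abs_mul, abs_abs, abs_of_nonneg hS0]
      have h5 : |Wsc b σ x₀ u ρ k (qt ω) + σ*t*Real.sqrt (Ysc b σ x₀ u k (qt ω))/ρ^(k+1)|
          ≤ D + E := le_trans (abs_add_le _ _) (by linarith)
      exact mul_le_mul hSD h5 (abs_nonneg _) hD0
    have hintr : Integrable (fun ω => ψ (Vf k ω) r) μ :=
      hIB _ ((hψm r).comp (hVm k)) _ (hψbd r (by rw [abs_of_pos hr0]))
    have hintmr : Integrable (fun ω => ψ (Vf k ω) (-r)) μ :=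
      hIB _ ((hψm (-r)).comp (hVm k)) _ (hψbd (-r) (by rw [abs_neg, abs_of_pos hr0]))
    obtain ⟨h1q, h2q⟩ := hq2 (k+1) (Nat.succ_le_succ (Nat.zero_le k)) hk
    have hstar := star_lemma μ (Vf k) (q (k+1)) (hq (k+1)) (hVind k hk') r hr0 h1q h2q
      ψ (hψm r) (hψm (-r)) hintr hintmr
    have hq1 : ∀ ω, qt ω (k+1) = q (k+1) ω := by
      intro ω
      simp only [hqt_def]
      rw [if_pos ⟨Nat.succ_le_succ (Nat.zero_le k), hk⟩]
    have hLH : (fun ω => ψ (Vf k ω) (q (k+1) ω))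
        = fun ω => Ssc b σ x₀ u ρ k (qt ω) * |Wsc b σ x₀ u ρ (k+1) (qt ω)| := by
      funext ω
      simp only [hψ_def]
      rw [hYV ω, hWV ω, hSV ω]
      have key : Wsc b σ x₀ u ρ k (qt ω)
          + σ*(q (k+1) ω)*Real.sqrt (Ysc b σ x₀ u k (qt ω))/ρ^(k+1)
          = Wsc b σ x₀ u ρ (k+1) (qt ω) := by
        simp only [Wsc, Ysc]
        rw [hq1 ω]
        have hu_eq : u = 1 - ρ := by rw [hρ_def]; ring
        rw [hu_eq]
        field_simp
        ring
      rw [key]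
    rw [hLH] at hstar
    have hpt : ∀ ω, Ssc b σ x₀ u ρ k (qt ω) * |Wsc b σ x₀ u ρ k (qt ω)|
        ≤ (1/2)*ψ (Vf k ω) r + (1/2)*ψ (Vf k ω) (-r) := by
      intro ω
      simp only [hψ_def]
      rw [hYV ω, hWV ω, hSV ω]
      have hAneg : σ*(-r)*Real.sqrt (Ysc b σ x₀ u k (qt ω))/ρ^(k+1)
          = -(σ*r*Real.sqrt (Ysc b σ x₀ u k (qt ω))/ρ^(k+1)) := by ring
      rw [hAneg]
      exact abs_avg_ge _ _ _ (Ssc_nonneg k _)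
    have hintL : Integrable (fun ω => Ssc b σ x₀ u ρ k (qt ω) * |Wsc b σ x₀ u ρ k (qt ω)|) μ := by
      apply hIB _ (((measurable_Ssc k).comp hqtm).mul ((measurable_Wsc k).comp hqtm).abs) (D*D)
      filter_upwards [hWb, hSb] with ω h2 h3
      have habs : abs (Ssc b σ x₀ u ρ k (qt ω) * abs (Wsc b σ x₀ u ρ k (qt ω)))
          = Ssc b σ x₀ u ρ k (qt ω) * abs (Wsc b σ x₀ u ρ k (qt ω)) :=
        abs_of_nonneg (mul_nonneg (Ssc_nonneg k _) (abs_nonneg _))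
      exact le_trans (le_of_eq habs)
        (mul_le_mul (h3 k hkn) (h2 k hkn) (abs_nonneg _) hD0)
    calc ∫ ω, Ssc b σ x₀ u ρ k (qt ω) * |Wsc b σ x₀ u ρ k (qt ω)| ∂μ
        ≤ ∫ ω, ((1/2)*ψ (Vf k ω) r + (1/2)*ψ (Vf k ω) (-r)) ∂μ :=
          integral_mono hintL ((hintr.const_mul _).add (hintmr.const_mul _)) hpt
      _ = (1/2) * ∫ ω, ψ (Vf k ω) r ∂μ + (1/2) * ∫ ω, ψ (Vf k ω) (-r) ∂μ := by
          rw [integral_add (hintr.const_mul _) (hintmr.const_mul _),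
            integral_const_mul, integral_const_mul]
      _ = ∫ ω, Ssc b σ x₀ u ρ k (qt ω) * |Wsc b σ x₀ u ρ (k+1) (qt ω)| ∂μ := hstar.symm
  -- Doob-type bound
  have hWm : ∀ k, Measurable (fun ω => Wsc b σ x₀ u ρ k (qt ω)) :=
    fun k => (measurable_Wsc k).comp hqtm
  have hSm : ∀ k, Measurable (fun ω => Ssc b σ x₀ u ρ k (qt ω)) :=
    fun k => (measurable_Ssc k).comp hqtm
  have hD0 : 0 ≤ D := by
    rw [hD_def]
    exact mul_nonneg (by linarith [hBnn n]) (by positivity)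
  have hintS2 : Integrable (fun ω => (Ssc b σ x₀ u ρ n (qt ω))^2) μ := by
    apply hIB _ ((hSm n).pow_const 2) (D^2)
    filter_upwards [hSb] with ω h3
    rw [abs_of_nonneg (sq_nonneg _)]
    exact pow_le_pow_left₀ (Ssc_nonneg n _) (h3 n le_rfl) 2
  have hintW2 : Integrable (fun ω => (Wsc b σ x₀ u ρ n (qt ω))^2) μ := by
    apply hIB _ ((hWm n).pow_const 2) (D^2)
    filter_upwards [hWb] with ω h2
    rw [abs_pow]
    exact pow_le_pow_left₀ (abs_nonneg _) (h2 n le_rfl) 2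
  have hintSW : ∀ j k, j ≤ n → k ≤ n →
      Integrable (fun ω => Ssc b σ x₀ u ρ j (qt ω) * |Wsc b σ x₀ u ρ k (qt ω)|) μ := by
    intro j k hj hk
    apply hIB _ ((hSm j).mul (hWm k).abs) (D*D)
    filter_upwards [hWb, hSb] with ω h2 h3
    have habs : abs (Ssc b σ x₀ u ρ j (qt ω) * abs (Wsc b σ x₀ u ρ k (qt ω)))
        = Ssc b σ x₀ u ρ j (qt ω) * abs (Wsc b σ x₀ u ρ k (qt ω)) :=
      abs_of_nonneg (mul_nonneg (Ssc_nonneg j _) (abs_nonneg _))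
    exact le_trans (le_of_eq habs)
      (mul_le_mul (h3 j hj) (h2 k hk) (abs_nonneg _) hD0)
  have hterm_int : ∀ k ∈ Finset.range n, Integrable (fun ω =>
      Ssc b σ x₀ u ρ k (qt ω) *
        (|Wsc b σ x₀ u ρ (k+1) (qt ω)| - |Wsc b σ x₀ u ρ k (qt ω)|)) μ := by
    intro k hkr
    have hk := Finset.mem_range.mp hkr
    have he : (fun ω => Ssc b σ x₀ u ρ k (qt ω) *
        (|Wsc b σ x₀ u ρ (k+1) (qt ω)| - |Wsc b σ x₀ u ρ k (qt ω)|))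
        = fun ω => Ssc b σ x₀ u ρ k (qt ω) * |Wsc b σ x₀ u ρ (k+1) (qt ω)|
            - Ssc b σ x₀ u ρ k (qt ω) * |Wsc b σ x₀ u ρ k (qt ω)| := by
      funext ω; ring
    rw [he]
    exact (hintSW k (k+1) (le_of_lt hk) hk).sub (hintSW k k (le_of_lt hk) (le_of_lt hk))
  have hdoob : ∫ ω, (Ssc b σ x₀ u ρ n (qt ω))^2 ∂μ
      ≤ 4 * ∫ ω, (Wsc b σ x₀ u ρ n (qt ω))^2 ∂μ := by
    have hsum_int := integrable_finset_sum (μ := μ) (Finset.range n) hterm_int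
    have hptw : ∀ ω, (Ssc b σ x₀ u ρ n (qt ω))^2
        ≤ 2*(Ssc b σ x₀ u ρ n (qt ω)*|Wsc b σ x₀ u ρ n (qt ω)|)
          - 2*∑ k ∈ Finset.range n, Ssc b σ x₀ u ρ k (qt ω) *
              (|Wsc b σ x₀ u ρ (k+1) (qt ω)| - |Wsc b σ x₀ u ρ k (qt ω)|) :=
      fun ω => pathwise_doob (fun k => |Wsc b σ x₀ u ρ k (qt ω)|)
        (fun k => Ssc b σ x₀ u ρ k (qt ω)) (fun k => abs_nonneg _) rfl (fun k => rfl) n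
    have hRHSint : Integrable (fun ω =>
        2*(Ssc b σ x₀ u ρ n (qt ω)*|Wsc b σ x₀ u ρ n (qt ω)|)
          - 2*∑ k ∈ Finset.range n, Ssc b σ x₀ u ρ k (qt ω) *
              (|Wsc b σ x₀ u ρ (k+1) (qt ω)| - |Wsc b σ x₀ u ρ k (qt ω)|)) μ :=
      ((hintSW n n le_rfl le_rfl).const_mul 2).sub (hsum_int.const_mul 2)
    have h1 := integral_mono hintS2 hRHSint hptw
    rw [integral_sub ((hintSW n n le_rfl le_rfl).const_mul 2) (hsum_int.const_mul 2),
      integral_const_mul, integral_const_mul, integral_finset_sum _ hterm_int] at h1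
    have h3 : ∀ k ∈ Finset.range n, (0:ℝ) ≤ ∫ ω, Ssc b σ x₀ u ρ k (qt ω) *
        (|Wsc b σ x₀ u ρ (k+1) (qt ω)| - |Wsc b σ x₀ u ρ k (qt ω)|) ∂μ := by
      intro k hkr
      have hk := Finset.mem_range.mp hkr
      have he : (fun ω => Ssc b σ x₀ u ρ k (qt ω) *
          (|Wsc b σ x₀ u ρ (k+1) (qt ω)| - |Wsc b σ x₀ u ρ k (qt ω)|))
          = fun ω => Ssc b σ x₀ u ρ k (qt ω) * |Wsc b σ x₀ u ρ (k+1) (qt ω)|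
              - Ssc b σ x₀ u ρ k (qt ω) * |Wsc b σ x₀ u ρ k (qt ω)| := by
        funext ω; ring
      rw [he, integral_sub (hintSW k (k+1) (le_of_lt hk) hk)
        (hintSW k k (le_of_lt hk) (le_of_lt hk))]
      have := hsubm k hk
      linarith [this]
    have h4 : (0:ℝ) ≤ ∑ k ∈ Finset.range n, ∫ ω, Ssc b σ x₀ u ρ k (qt ω) *
        (|Wsc b σ x₀ u ρ (k+1) (qt ω)| - |Wsc b σ x₀ u ρ k (qt ω)|) ∂μ :=
      Finset.sum_nonneg h3
    have h5 : ∫ ω, (Ssc b σ x₀ u ρ n (qt ω))^2 ∂μ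
        ≤ 2 * ∫ ω, Ssc b σ x₀ u ρ n (qt ω)*|Wsc b σ x₀ u ρ n (qt ω)| ∂μ := by
      linarith [h1, h4]
    have h6 : ∫ ω, (2:ℝ)*(Ssc b σ x₀ u ρ n (qt ω)*|Wsc b σ x₀ u ρ n (qt ω)|) ∂μ
        ≤ ∫ ω, ((Ssc b σ x₀ u ρ n (qt ω))^2/2 + 2*(Wsc b σ x₀ u ρ n (qt ω))^2) ∂μ :=
      integral_mono ((hintSW n n le_rfl le_rfl).const_mul 2)
        ((hintS2.div_const 2).add (hintW2.const_mul 2))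
        (fun ω => young_bound _ _)
    rw [integral_const_mul, integral_add (hintS2.div_const 2) (hintW2.const_mul 2),
      integral_div, integral_const_mul] at h6
    linarith [h5, h6]
  have hWn : ∫ ω, (Wsc b σ x₀ u ρ n (qt ω))^2 ∂μ ≤ Real.exp (4*T) * (2*(C2 + b^2)) := by
    have hρn : (1:ℝ) ≤ Real.exp (4*T) * ((ρ^n)^2) := by
      have h := rho_exp_bound u T n hu0 hu2 hun
      rw [← hρ_def] at h
      exact h
    have hintYb : Integrable (fun ω => (Ysc b σ x₀ u n (qt ω) - b)^2) μ := by
      apply hIB _ (((hYm n).sub measurable_const).pow_const 2) ((Bsc b σ x₀ u r n + b)^2)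
      filter_upwards [hbdd] with ω hω
      rw [abs_pow]
      apply pow_le_pow_left₀ (abs_nonneg _) _ 2
      have h2 := abs_le.mp (hω n)
      show |Ysc b σ x₀ u n (qt ω) - b| ≤ Bsc b σ x₀ u r n + b
      rw [abs_le]; constructor <;> [linarith; linarith]
    have hWpt : ∀ ω, (Wsc b σ x₀ u ρ n (qt ω))^2
        ≤ Real.exp (4*T) * ((Ysc b σ x₀ u n (qt ω) - b)^2) := by
      intro ω
      have h1 : (Wsc b σ x₀ u ρ n (qt ω))^2 = (Ysc b σ x₀ u n (qt ω) - b)^2 / ((ρ^n)^2) := by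
        simp only [Wsc]; rw [div_pow]
      rw [h1, div_le_iff₀ (by positivity)]
      nlinarith [mul_le_mul_of_nonneg_left hρn (sq_nonneg (Ysc b σ x₀ u n (qt ω) - b))]
    have h2 : ∫ ω, (Wsc b σ x₀ u ρ n (qt ω))^2 ∂μ
        ≤ Real.exp (4*T) * ∫ ω, (Ysc b σ x₀ u n (qt ω) - b)^2 ∂μ := by
      rw [← integral_const_mul]
      exact integral_mono hintW2 (hintYb.const_mul _) hWpt
    have h3 : ∫ ω, (Ysc b σ x₀ u n (qt ω) - b)^2 ∂μ ≤ 2*C2 + 2*b^2 := by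
      have h4 : ∫ ω, (Ysc b σ x₀ u n (qt ω) - b)^2 ∂μ
          ≤ ∫ ω, (2*(Ysc b σ x₀ u n (qt ω))^2 + 2*b^2) ∂μ :=
        integral_mono hintYb (((hY2int n).const_mul 2).add (integrable_const _))
          (fun ω => sq_sub_le _ _)
      rw [integral_add ((hY2int n).const_mul 2) (integrable_const _),
        integral_const_mul, integral_const] at h4
      simp only [measure_univ, probReal_univ, ENNReal.toReal_one, smul_eq_mul, one_mul] at h4
      linarith [h4, hm2 n le_rfl]
    calc ∫ ω, (Wsc b σ x₀ u ρ n (qt ω))^2 ∂μ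
        ≤ Real.exp (4*T) * ∫ ω, (Ysc b σ x₀ u n (qt ω) - b)^2 ∂μ := h2
      _ ≤ Real.exp (4*T) * (2*C2 + 2*b^2) :=
          mul_le_mul_of_nonneg_left h3 (Real.exp_pos _).le
      _ = Real.exp (4*T) * (2*(C2 + b^2)) := by ring
  -- final assembly
  have hsup : ∀ ω, (Finset.Iic n).sup' Finset.nonempty_Iic (fun k => (X k ω)^2)
      ≤ 2*(Ssc b σ x₀ u ρ n (qt ω))^2 + 2*b^2 := by
    intro ω
    apply Finset.sup'_le
    intro k hkm
    have hk := Finset.mem_Iic.mp hkm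
    have hXk : X k ω = Wsc b σ x₀ u ρ k (qt ω) * ρ^k + b := by
      rw [hXY k hk ω]
      simp only [Wsc]
      rw [div_mul_cancel₀ _ (ne_of_gt (pow_pos hρ0 k))]
      ring
    rw [hXk]
    exact final_sq_bound _ _ _ _ (Wsc_le_Ssc hk (qt ω))
      (by nlinarith [pow_le_one₀ (n := k) hρ0.le hρ1, pow_nonneg hρ0.le k])
  have h0sup : ∀ ω, 0 ≤ (Finset.Iic n).sup' Finset.nonempty_Iic (fun k => (X k ω)^2) := by
    intro ω
    exact le_trans (sq_nonneg (X 0 ω))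
      (Finset.le_sup' (fun k => (X k ω)^2) (Finset.mem_Iic.mpr (Nat.zero_le n)))
  calc ∫ ω, (Finset.Iic n).sup' Finset.nonempty_Iic (fun k => (X k ω)^2) ∂μ
      ≤ ∫ ω, (2*(Ssc b σ x₀ u ρ n (qt ω))^2 + 2*b^2) ∂μ :=
        integral_mono_of_nonneg (Filter.Eventually.of_forall h0sup)
          ((hintS2.const_mul 2).add (integrable_const _))
          (Filter.Eventually.of_forall hsup)
    _ = 2*(∫ ω, (Ssc b σ x₀ u ρ n (qt ω))^2 ∂μ) + 2*b^2 := by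
        rw [integral_add (hintS2.const_mul 2) (integrable_const _),
          integral_const_mul, integral_const]
        simp [measure_univ]
    _ ≤ 16 * Real.exp (4*T) * (C2 + b^2) + 2*b^2 + 1 := by
        nlinarith [hdoob, hWn]
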